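/- Let H be a real inner product space and α > 0 a real number. Given e₁, e₂, g₁₂, g₂₁ ∈ H, define the updated transmission data g₁₂' = 2α·e₂ − g₂₁ and g₂₁' = 2α·e₁ − g₁₂. Then (1/α)(‖g₁₂'‖² + ‖g₂₁'‖²) = (1/α)(‖g₁₂‖² + ‖g₂₁‖²) − 4[⟨g₁₂ − α·e₁, e₁⟩ + ⟨g₂₁ − α·e₂, e₂⟩]. -/

import Mathlib

open scoped RealInnerProductSpace

/-- Abstract form of Lemma 4.2: the energy identity for one step of the Robin
transmission update. -/
theorem robin_update_energy_identity {H : Type*} [NormedAddCommGroup H]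
    [InnerProductSpace ℝ H] (α : ℝ) (hα : 0 < α) (e₁ e₂ g₁₂ g₂₁ : H)
    (g₁₂' g₂₁' : H)
    (h₁₂ : g₁₂' = (2 * α) • e₂ - g₂₁) (h₂₁ : g₂₁' = (2 * α) • e₁ - g₁₂) :
    (1 / α) * (‖g₁₂'‖ ^ 2 + ‖g₂₁'‖ ^ 2)
      = (1 / α) * (‖g₁₂‖ ^ 2 + ‖g₂₁‖ ^ 2)
        - 4 * (⟪g₁₂ - α • e₁, e₁⟫ + ⟪g₂₁ - α • e₂, e₂⟫) := by
  subst h₁₂ h₂₁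
  have hn : ∀ x : H, ‖x‖ ^ 2 = ⟪x, x⟫ := fun x => (real_inner_self_eq_norm_sq x).symm
  simp only [hn, inner_sub_left, inner_sub_right, inner_smul_left, inner_smul_right,
    real_inner_comm e₁ g₁₂, real_inner_comm e₂ g₂₁, conj_trivial]
  field_simp
  ring
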